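/- Let $(P, \Theta, \omega)$ be a premulticontact manifold. Then the characteristic distribution equals the intersection of the Reeb distribution with $\ker\Theta$: $\ker\omega \cap \ker\Theta \cap \ker\mathrm{d}\Theta = \mathcal{D}^{\mathfrak{R}} \cap \ker\Theta$. -/

import Mathlib

open scoped BigOperators

noncomputable section

/-- Vector fields on `P` in a trivialized model with tangent model space `E`. -/
abbrev VF (P E : Type) := P → E

/-- Differential `k`-forms on `P` in the trivialized model: a pointwise alternating `k`-form. -/
abbrev Form (P E : Type) [AddCommGroup E] [Module ℝ E] (k : ℕ) :=
  P → AlternatingMap ℝ E ℝ (Fin k)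

variable {P E : Type} [AddCommGroup E] [Module ℝ E]

/-- Interior product (contraction) of a vector field with a `(k+1)`-form. -/
def iotaF {k : ℕ} (X : VF P E) (α : Form P E (k + 1)) : Form P E k :=
  fun p => (α p).curryLeft (X p)

/-- Multiplication of a form by a function. -/
def fsmul {k : ℕ} (g : P → ℝ) (β : Form P E k) : Form P E k := fun p => g p • β p

/-- A function regarded as a `0`-form. -/
def toF0 (g : P → ℝ) : Form P E 0 := fun p => AlternatingMap.constOfIsEmpty ℝ E (Fin 0) (g p)

/-- The pointwise wedge product of alternating forms. -/
def altWedge {j k : ℕ} (f : AlternatingMap ℝ E ℝ (Fin j))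
    (g : AlternatingMap ℝ E ℝ (Fin k)) : AlternatingMap ℝ E ℝ (Fin (j + k)) :=
  (LinearMap.mul' ℝ ℝ).compAlternatingMap ((f.domCoprod g).domDomCongr finSumFinEquiv)

/-- Pointwise wedge of a `1`-form with a `k`-form. -/
def w1p {k : ℕ} (σ : AlternatingMap ℝ E ℝ (Fin 1))
    (β : AlternatingMap ℝ E ℝ (Fin k)) : AlternatingMap ℝ E ℝ (Fin (k + 1)) :=
  (altWedge σ β).domDomCongr (finCongr (Nat.add_comm 1 k))

/-- Pointwise wedge of a `2`-form with a `k`-form. -/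
def w2p {k : ℕ} (γ : AlternatingMap ℝ E ℝ (Fin 2))
    (β : AlternatingMap ℝ E ℝ (Fin k)) : AlternatingMap ℝ E ℝ (Fin (k + 2)) :=
  (altWedge γ β).domDomCongr (finCongr (Nat.add_comm 2 k))

/-- Wedge of a `1`-form with a `k`-form, at the level of forms on `P`. -/
def w1F {k : ℕ} (σ : Form P E 1) (β : Form P E k) : Form P E (k + 1) :=
  fun p => w1p (σ p) (β p)

/-- Wedge of a `2`-form with a `k`-form, at the level of forms on `P`. -/
def w2F {k : ℕ} (γ : Form P E 2) (β : Form P E k) : Form P E (k + 2) :=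
  fun p => w2p (γ p) (β p)

/-- An abstract differential calculus on the trivialized model `P × E`:
an exterior derivative, a Lie bracket of vector fields and a Lie derivative,
satisfying the usual Cartan calculus identities. -/
structure DiffCalc (P E : Type) [AddCommGroup E] [Module ℝ E] where
  d : ∀ {k : ℕ}, Form P E k → Form P E (k + 1)
  bracket : VF P E → VF P E → VF P E
  lieD : VF P E → ∀ {k : ℕ}, Form P E k → Form P E k
  d_add : ∀ {k : ℕ} (α β : Form P E k), d (α + β) = d α + d β
  d_smul : ∀ {k : ℕ} (c : ℝ) (α : Form P E k), d (c • α) = c • d α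
  d_d : ∀ {k : ℕ} (α : Form P E k), d (d α) = 0
  cartan : ∀ (X : VF P E) {k : ℕ} (α : Form P E (k + 1)),
    lieD X α = iotaF X (d α) + d (iotaF X α)
  lie_iota : ∀ (X Y : VF P E) {k : ℕ} (α : Form P E (k + 1)),
    lieD X (iotaF Y α) = iotaF (bracket X Y) α + iotaF Y (lieD X α)
  lieD_add : ∀ (X : VF P E) {k : ℕ} (α β : Form P E k),
    lieD X (α + β) = lieD X α + lieD X β
  leibniz_fun : ∀ (g : P → ℝ) {k : ℕ} (β : Form P E k),
    d (fsmul g β) = w1F (d (toF0 g)) β + fsmul g (d β)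
  leibniz_one : ∀ (σ : Form P E 1) {k : ℕ} (β : Form P E k),
    d (w1F σ β) = w2F (d σ) β - w1F σ (d β)

/-- The kernel (at `p`) of a form of positive degree. -/
def kerSet {k : ℕ} (ω : Form P E (k + 1)) (p : P) : Set E :=
  {v | (ω p).curryLeft v = 0}

/-- The rank of a subset of the tangent model: the dimension of its span. -/
def rk (S : Set E) : ℕ := Module.finrank ℝ (Submodule.span ℝ S)

/-- A `j`-form is semibasic (annihilated by `ker ω`) ; every `0`-form is semibasic. -/
def SemibasicPt {m : ℕ} (ω : Form P E (m + 1)) : ∀ {j : ℕ}, Form P E j → Prop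
  | 0, _ => True
  | _ + 1, α => ∀ p, ∀ v ∈ kerSet ω p, (α p).curryLeft v = 0

/-- The Reeb "distribution" at a point `p`: tangent vectors in `ker ω` whose contraction with
`dΘ` is annihilated by `ker ω`. -/
def reebSet (C : DiffCalc P E) {m : ℕ} (Θ ω : Form P E (m + 1)) (p : P) : Set E :=
  {v | v ∈ kerSet ω p ∧ ∀ w ∈ kerSet ω p, (((C.d Θ) p).curryLeft v).curryLeft w = 0}

/-- The characteristic distribution `ker ω ∩ ker Θ ∩ ker dΘ` at a point. -/
def charSet (C : DiffCalc P E) {m : ℕ} (Θ ω : Form P E (m + 1)) (p : P) : Set E :=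
  {v | v ∈ kerSet ω p ∧ (Θ p).curryLeft v = 0 ∧ ((C.d Θ) p).curryLeft v = 0}

/-- A Reeb vector field: a section of the Reeb distribution. -/
def IsReebField (C : DiffCalc P E) {m : ℕ} (Θ ω : Form P E (m + 1)) (R : VF P E) : Prop :=
  ∀ p, R p ∈ reebSet C Θ ω p

/-- Definition of a premulticontact structure `(Θ, ω)` on `P` (degrees `m+1`, i.e. `dim M = m+1`):
`ω` is closed, `ker ω` has constant rank `N`, the Reeb distribution has rank `(m+1)+k`, the
characteristic distribution has rank `k`, and the semibasic `m`-forms are exactly the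
contractions `i(R)Θ` with Reeb vector fields `R`.  For `k = 0` this is a multicontact
structure. -/
structure IsPremulticontact (C : DiffCalc P E) (m N k : ℕ) (Θ ω : Form P E (m + 1)) :
    Prop where
  dim_eq : Module.finrank ℝ E = (m + 1) + N
  k_le : k ≤ N - (m + 1)
  closed : C.d ω = 0
  rank_ker : ∀ p, rk (kerSet ω p) = N
  rank_reeb : ∀ p, rk (reebSet C Θ ω p) = (m + 1) + k
  rank_char : ∀ p, rk (charSet C Θ ω p) = k
  reeb_semibasic :
    {α : Form P E m | SemibasicPt ω α} =
      {α : Form P E m | ∃ R : VF P E, IsReebField C Θ ω R ∧ α = iotaF R Θ}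


namespace PMCaux

open AlternatingMap

lemma curryLeft_compLinearMap {n : ℕ} {F : Type*} [AddCommGroup F] [Module ℝ F]
    (f : AlternatingMap ℝ F ℝ (Fin (n + 1))) (g : E →ₗ[ℝ] F) (x : E) :
    (f.compLinearMap g).curryLeft x = (f.curryLeft (g x)).compLinearMap g := by
  ext v
  have h : (⇑g ∘ Matrix.vecCons x v) = Matrix.vecCons (g x) (⇑g ∘ v) := Fin.comp_cons _ _ _
  simp [AlternatingMap.curryLeft_apply_apply, AlternatingMap.compLinearMap_apply, h]

/-- Pullback along the quotient map as a linear map on alternating forms. -/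
def compQ (m : ℕ) (K : Submodule ℝ E) :
    AlternatingMap ℝ (E ⧸ K) ℝ (Fin m) →ₗ[ℝ] AlternatingMap ℝ E ℝ (Fin m) where
  toFun γ := γ.compLinearMap K.mkQ
  map_add' γ δ := by ext v; simp
  map_smul' c γ := by ext v; simp

lemma compQ_injective (m : ℕ) (K : Submodule ℝ E) : Function.Injective (compQ m K) := by
  intro γ δ h
  ext v
  have hs := Submodule.mkQ_surjective K
  set u : Fin m → E := fun i => Function.surjInv hs (v i) with hu
  have hv : (fun i => (Submodule.Quotient.mk (u i) : E ⧸ K)) = v :=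
    funext fun i => Function.surjInv_eq hs (v i)
  have := DFunLike.congr_fun h u
  simp only [compQ, LinearMap.coe_mk, AddHom.coe_mk,
    AlternatingMap.compLinearMap_apply] at this
  simpa [hv] using this

/-- The kernel of `ω` at `p`, as a submodule. -/
def kerMod {m : ℕ} (ω : Form P E (m + 1)) (p : P) : Submodule ℝ E :=
  LinearMap.ker ((ω p).curryLeft)

lemma mem_kerMod {m : ℕ} (ω : Form P E (m + 1)) (p : P) (v : E) :
    v ∈ kerMod ω p ↔ v ∈ kerSet ω p := Iff.rfl

lemma kerSet_eq_coe {m : ℕ} (ω : Form P E (m + 1)) (p : P) :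
    kerSet ω p = ↑(kerMod ω p) := rfl

/-- A pointwise extension-by-zero of a form that factors through the quotient by
`ker ω` at `p` is semibasic. -/
lemma semibasicPt_single [DecidableEq P] :
    ∀ {m : ℕ} (ω : Form P E (m + 1)) (p : P)
      (γ : AlternatingMap ℝ (E ⧸ kerMod ω p) ℝ (Fin m)),
      SemibasicPt ω
        (fun q => if q = p then γ.compLinearMap (kerMod ω p).mkQ else 0)
  | 0, _, _, _ => trivial
  | (m + 1), ω, p, γ => by
    intro q v hv
    by_cases hq : q = p
    · subst hq
      have hred : (fun q_1 => if q_1 = q then γ.compLinearMap (kerMod ω q).mkQ else 0) q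
          = γ.compLinearMap (kerMod ω q).mkQ := by simp
      rw [hred, curryLeft_compLinearMap]
      have hv0 : (kerMod ω q).mkQ v = 0 := (Submodule.Quotient.mk_eq_zero _).mpr hv
      rw [hv0, _root_.map_zero]
      exact AlternatingMap.zero_compLinearMap _
    · have hred : (fun q' => if q' = p then γ.compLinearMap (kerMod ω p).mkQ else 0) q
          = 0 := by simp [hq]
      rw [hred]
      exact DFunLike.congr_fun AlternatingMap.curryLeft_zero v

/-- Every covector factoring through the quotient is `i(v)Θ_p` for some Reeb vector `v`. -/
lemma exists_reeb_curry {m N k : ℕ} (C : DiffCalc P E) (Θ ω : Form P E (m + 1))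
    (hpmc : IsPremulticontact C m N k Θ ω) (p : P)
    (γ : AlternatingMap ℝ (E ⧸ kerMod ω p) ℝ (Fin m)) :
    ∃ v ∈ reebSet C Θ ω p,
      (Θ p).curryLeft v = γ.compLinearMap (kerMod ω p).mkQ := by
  classical
  set α : Form P E m :=
    (fun q => if q = p then γ.compLinearMap (kerMod ω p).mkQ else 0) with hαdef
  have hα : SemibasicPt ω α := semibasicPt_single ω p γ
  have h2 : α ∈ {α : Form P E m | ∃ R : VF P E, IsReebField C Θ ω R ∧ α = iotaF R Θ} := by
    rw [← hpmc.reeb_semibasic]; exact hα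
  obtain ⟨R, hR, hRα⟩ := h2
  refine ⟨R p, hR p, ?_⟩
  have := congrFun hRα p
  simp only [hαdef, if_pos rfl] at this
  exact this.symm

lemma altsum_apply {n : ℕ} {Q : Type*} [AddCommGroup Q] [Module ℝ Q] {ι : Type*}
    (s : Finset ι) (f : ι → AlternatingMap ℝ Q ℝ (Fin n)) (t : Fin n → Q) :
    (∑ j ∈ s, f j) t = ∑ j ∈ s, f j t := by
  classical
  induction s using Finset.cons_induction with
  | empty => simp
  | cons a s ha ih =>
    rw [Finset.cons_eq_insert, Finset.sum_insert ha, Finset.sum_insert ha,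
      AlternatingMap.add_apply, ih]

lemma det_curry_linearIndependent {n : ℕ} {Q : Type*} [AddCommGroup Q] [Module ℝ Q]
    (b : Module.Basis (Fin (n + 1)) ℝ Q) :
    LinearIndependent ℝ (fun i : Fin (n + 1) => b.det.curryLeft (b i)) := by
  rw [Fintype.linearIndependent_iff]
  intro g hg i
  set t : Fin n → Q := fun l => b (i.succAbove l) with htdef
  have ht := DFunLike.congr_fun hg t
  rw [altsum_apply] at ht
  simp only [AlternatingMap.smul_apply, AlternatingMap.curryLeft_apply_apply,
    smul_eq_mul, AlternatingMap.zero_apply] at ht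
  -- the diagonal value is nonzero
  have hinj : Function.Injective (Fin.cons i i.succAbove : Fin (n + 1) → Fin (n + 1)) := by
    intro a a' h
    rcases Fin.eq_zero_or_eq_succ a with rfl | ⟨l, rfl⟩ <;>
      rcases Fin.eq_zero_or_eq_succ a' with rfl | ⟨l', rfl⟩
    · rfl
    · simp only [Fin.cons_zero, Fin.cons_succ] at h
      exact absurd h.symm (Fin.succAbove_ne i l')
    · simp only [Fin.cons_zero, Fin.cons_succ] at h
      exact absurd h (Fin.succAbove_ne i l)
    · simp only [Fin.cons_succ] at h
      exact congrArg Fin.succ (Fin.succAbove_right_injective h)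
  have hbij := Finite.injective_iff_bijective.mp hinj
  set σ : Equiv.Perm (Fin (n + 1)) := Equiv.ofBijective _ hbij with hσ
  have hcomp : Matrix.vecCons (b i) t = ⇑b ∘ ⇑σ := by
    funext l
    refine Fin.cases ?_ ?_ l
    · simp [hσ, Equiv.ofBijective]
    · intro l'; simp [hσ, Equiv.ofBijective, htdef]
  have hdiag : b.det (Matrix.vecCons (b i) t) ≠ 0 := by
    rw [hcomp, b.det.map_perm ⇑b σ, Module.Basis.det_self]
    rcases Int.units_eq_one_or (Equiv.Perm.sign σ) with h | h <;> rw [h] <;> norm_num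
  -- off-diagonal values vanish
  have hoff : ∀ j, j ≠ i → b.det (Matrix.vecCons (b j) t) = 0 := by
    intro j hj
    obtain ⟨z, hz⟩ := Fin.exists_succAbove_eq hj
    refine AlternatingMap.map_eq_zero_of_eq _ _ (i := 0) (j := z.succ) ?_ ?_
    · simp [htdef, hz]
    · exact (Fin.succ_ne_zero z).symm
  have hsum : ∑ j : Fin (n + 1), g j * b.det (Matrix.vecCons (b j) t) =
      g i * b.det (Matrix.vecCons (b i) t) := by
    refine Finset.sum_eq_single i ?_ ?_
    · intro j _ hj; rw [hoff j hj, mul_zero]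
    · intro h; exact absurd (Finset.mem_univ i) h
  rw [hsum] at ht
  exact (mul_eq_zero.mp ht).resolve_right hdiag

end PMCaux

/-- On a premulticontact manifold `(P, Θ, ω)`, the characteristic
distribution equals the intersection of the Reeb distribution with `ker Θ`:
`ker ω ∩ ker Θ ∩ ker dΘ = 𝒟^𝕽 ∩ ker Θ`. -/
theorem characteristic_eq_reeb_inter_kerTheta
    {P E : Type} [AddCommGroup E] [Module ℝ E] (C : DiffCalc P E)
    {m N k : ℕ} (Θ ω : Form P E (m + 1))
    (hpmc : IsPremulticontact C m N k Θ ω) :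
    ∀ p : P, charSet C Θ ω p = reebSet C Θ ω p ∩ {v | (Θ p).curryLeft v = 0} := by
  intro p
  classical
  have hfinE : FiniteDimensional ℝ E :=
    FiniteDimensional.of_finrank_pos (by rw [hpmc.dim_eq]; omega)
  set K : Submodule ℝ E := PMCaux.kerMod ω p with hK
  set Φ : E →ₗ[ℝ] AlternatingMap ℝ E ℝ (Fin m) := (Θ p).curryLeft with hΦ
  set L : E → (E →ₗ[ℝ] AlternatingMap ℝ E ℝ (Fin m)) := fun w =>
    (AlternatingMap.curryLeftLinearMap.flip w).comp ((C.d Θ) p).curryLeft with hL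
  set Rmod : Submodule ℝ E := K ⊓ ⨅ (w : E) (_ : w ∈ K), LinearMap.ker (L w) with hRmod
  set Cmod : Submodule ℝ E :=
    K ⊓ LinearMap.ker Φ ⊓ LinearMap.ker ((C.d Θ) p).curryLeft with hCmod
  have hLval : ∀ w v : E, L w v = (((C.d Θ) p).curryLeft v).curryLeft w := fun w v => rfl
  have hRset : reebSet C Θ ω p = ↑Rmod := by
    ext v
    simp only [reebSet, Set.mem_setOf_eq, SetLike.mem_coe, hRmod, Submodule.mem_inf,
      Submodule.mem_iInf, LinearMap.mem_ker]
    exact Iff.rfl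
  have hCset : charSet C Θ ω p = ↑Cmod := by
    ext v
    simp only [charSet, Set.mem_setOf_eq, SetLike.mem_coe, hCmod, Submodule.mem_inf,
      LinearMap.mem_ker]
    exact ⟨fun ⟨a, b, c⟩ => ⟨⟨a, b⟩, c⟩, fun ⟨⟨a, b⟩, c⟩ => ⟨a, b, c⟩⟩
  have hrkR : Module.finrank ℝ Rmod = (m + 1) + k := by
    have h := hpmc.rank_reeb p
    rw [hRset] at h
    rwa [rk, Submodule.span_eq] at h
  have hrkC : Module.finrank ℝ Cmod = k := by
    have h := hpmc.rank_char p
    rw [hCset] at h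
    rwa [rk, Submodule.span_eq] at h
  have hrkK : Module.finrank ℝ K = N := by
    have h := hpmc.rank_ker p
    rw [PMCaux.kerSet_eq_coe ω p] at h
    rwa [rk, Submodule.span_eq] at h
  have hQrank : Module.finrank ℝ (E ⧸ K) = m + 1 := by
    have h1 := Submodule.finrank_quotient_add_finrank K
    rw [hpmc.dim_eq, hrkK] at h1
    omega
  set b := Module.finBasisOfFinrankEq ℝ (E ⧸ K) hQrank with hb
  set γ : Fin (m + 1) → AlternatingMap ℝ (E ⧸ K) ℝ (Fin m) :=
    fun i => b.det.curryLeft (b i) with hγdef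
  have hγ : LinearIndependent ℝ γ := PMCaux.det_curry_linearIndependent b
  set β : Fin (m + 1) → AlternatingMap ℝ E ℝ (Fin m) :=
    fun i => PMCaux.compQ m K (γ i) with hβdef
  have hβ : LinearIndependent ℝ β :=
    hγ.map' (PMCaux.compQ m K) (LinearMap.ker_eq_bot.mpr (PMCaux.compQ_injective m K))
  set Φ' : Rmod →ₗ[ℝ] AlternatingMap ℝ E ℝ (Fin m) := Φ.domRestrict Rmod with hΦ'
  have hmem : ∀ i, β i ∈ LinearMap.range Φ' := by
    intro i
    obtain ⟨v, hv, hveq⟩ := PMCaux.exists_reeb_curry C Θ ω hpmc p (γ i)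
    have hvR : v ∈ Rmod := by rw [← SetLike.mem_coe, ← hRset]; exact hv
    exact ⟨⟨v, hvR⟩, hveq⟩
  have hcard : m + 1 ≤ Module.finrank ℝ (LinearMap.range Φ') := by
    have hind : LinearIndependent ℝ
        (fun i => (⟨β i, hmem i⟩ : LinearMap.range Φ')) := by
      apply LinearIndependent.of_comp (LinearMap.range Φ').subtype
      exact hβ
    simpa using hind.fintype_card_le_finrank
  have hrn := LinearMap.finrank_range_add_finrank_ker Φ'
  have hkerφ : Module.finrank ℝ ↥(Rmod ⊓ LinearMap.ker Φ) =
      Module.finrank ℝ (LinearMap.ker Φ') := by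
    have h1 : LinearMap.ker Φ' = Submodule.comap Rmod.subtype (Rmod ⊓ LinearMap.ker Φ) := by
      rw [hΦ', LinearMap.ker_domRestrict, Submodule.comap_inf,
        Submodule.comap_subtype_self, top_inf_eq]
    rw [h1]
    exact ((Submodule.comapSubtypeEquivOfLe inf_le_left).finrank_eq).symm
  have hle2 : Module.finrank ℝ ↥(Rmod ⊓ LinearMap.ker Φ) ≤ k := by
    rw [hrkR] at hrn
    omega
  have hCle : Cmod ≤ Rmod ⊓ LinearMap.ker Φ := by
    intro v hv
    rw [hCmod, Submodule.mem_inf, Submodule.mem_inf] at hv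
    obtain ⟨⟨h1, h2⟩, h3⟩ := hv
    rw [LinearMap.mem_ker] at h3
    refine Submodule.mem_inf.mpr ⟨?_, h2⟩
    rw [hRmod, Submodule.mem_inf]
    refine ⟨h1, (Submodule.mem_iInf _).mpr fun w => (Submodule.mem_iInf _).mpr fun hw => ?_⟩
    rw [LinearMap.mem_ker, hLval, h3]
    exact DFunLike.congr_fun AlternatingMap.curryLeft_zero w

  have hCeq : Cmod = Rmod ⊓ LinearMap.ker Φ :=
    Submodule.eq_of_le_of_finrank_le hCle (by rw [hrkC]; exact hle2)
  rw [hCset, hCeq, Submodule.coe_inf, hRset]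
  congr 1
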